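/- Let λ be a partition and b a semistandard Young tableau of shape λ with entries in the positive integers. Then b is μ-distinguished for some partition μ if and only if (1) ε_i(b) = 0 for every odd i, and (2) φ_i(b) is even for every odd i. Moreover, in that case the minimal such μ is μ_b = Σ_i (φ_{2i}(b) mod 2) ω_{2i}. -/
import Mathlib


open scoped Classical

noncomputable section

namespace GE

/-- The coefficient of the `i`-th fundamental weight (`i ≥ 1`) in the dominant weight
corresponding to the partition `μ`: the number of columns of the Young diagram of `μ`
of height exactly `i`. -/
def coord (μ : YoungDiagram) (i : ℕ) : ℕ := μ.rowLen (i - 1) - μ.rowLen i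

/-- The Japanese reading word of a semistandard Young tableau: columns are read from right
to left, each column from top to bottom. -/
def jword {μ : YoungDiagram} (T : SemistandardYoungTableau μ) : List ℕ :=
  (((List.range (μ.rowLen 0)).reverse).map fun j =>
    (List.range (μ.colLen j)).map fun i => T i j).flatten

/-- The crystal statistic `ε_i` of a word, via the bracketing rule. -/
def wordEps (i : ℕ) (w : List ℕ) : ℕ :=
  (Finset.range (w.length + 1)).sup fun k => (w.take k).count (i + 1) - (w.take k).count i

/-- The crystal statistic `φ_i` of a word, via the bracketing rule. -/
def wordPhi (i : ℕ) (w : List ℕ) : ℕ :=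
  (Finset.range (w.length + 1)).sup fun k => (w.drop k).count i - (w.drop k).count (i + 1)

/-- The crystal statistic `ε_i` of a semistandard tableau. -/
def eps (i : ℕ) {μ : YoungDiagram} (T : SemistandardYoungTableau μ) : ℕ := wordEps i (jword T)

/-- The crystal statistic `φ_i` of a semistandard tableau. -/
def phi (i : ℕ) {μ : YoungDiagram} (T : SemistandardYoungTableau μ) : ℕ := wordPhi i (jword T)

/-- The number of entries of `T` equal to `k`. -/
def cnt {μ : YoungDiagram} (T : SemistandardYoungTableau μ) (k : ℕ) : ℕ := (jword T).count k

/-- All entries of `T` lie in the alphabet `{1, …, m}`. -/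
def EntriesIn {μ : YoungDiagram} (T : SemistandardYoungTableau μ) (m : ℕ) : Prop :=
  ∀ i j, (i, j) ∈ μ → 1 ≤ T i j ∧ T i j ≤ m

/-- All entries of `T` are positive integers. -/
def PosEntries {μ : YoungDiagram} (T : SemistandardYoungTableau μ) : Prop :=
  ∀ i j, (i, j) ∈ μ → 1 ≤ T i j

/-- The partition `ν` has all parts even (`ν ∈ 𝒫^{(2)}`). -/
def EvenParts (ν : YoungDiagram) : Prop := ∀ i, Even (ν.rowLen i)

/-- Every part of `δ` occurs with even multiplicity, i.e. `δ_{2i-1} = δ_{2i}` for all `i ≥ 1`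
(`δ ∈ 𝒫^{(1,1)}`). -/
def EvenMult (δ : YoungDiagram) : Prop := ∀ i, δ.rowLen (2 * i) = δ.rowLen (2 * i + 1)

/-- `b` is `μ`-distinguished: there are `ν ∈ 𝒫^{(2)}` and `δ ∈ 𝒫^{(1,1)}` with
`φ(b) = ν - μ` and `ε(b) = δ - μ`, as equalities of weights written in the basis of the
fundamental weights `ω_i` (a partition `κ` having `ω_i`-coefficient `coord κ i`). -/
def Distinguished {lam : YoungDiagram} (b : SemistandardYoungTableau lam)
    (μ : YoungDiagram) : Prop :=
  ∃ ν δ : YoungDiagram, EvenParts ν ∧ EvenMult δ ∧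
    (∀ i, 1 ≤ i → coord ν i = phi i b + coord μ i) ∧
    (∀ i, 1 ≤ i → coord δ i = eps i b + coord μ i)

/-- The coefficient of `ω_i` in `μ_b = Σ_i (φ_{2i}(b) mod 2) ω_{2i}`. -/
def muBcoord {lam : YoungDiagram} (b : SemistandardYoungTableau lam) (i : ℕ) : ℕ :=
  if Even i ∧ 1 ≤ i then phi i b % 2 else 0

/-- The size `|φ(b) + μ_b|` of the weight `φ(b) + μ_b` (a column of height `i`, i.e. the
fundamental weight `ω_i`, contributing `i` boxes). -/
def statB {lam : YoungDiagram} (b : SemistandardYoungTableau lam) : ℕ :=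
  ∑ᶠ i : ℕ, i * (phi i b + muBcoord b i)

/-- `κ ≤_⊞ μ`, i.e. `μ - κ ∈ 𝒫^{⊞} = 𝒫^{(2)} ∩ 𝒫^{(1,1)}`; in terms of the coefficients of
the fundamental weights: the difference `μ - κ` is nonnegative, vanishes in each odd
coordinate, and is even in each coordinate. -/
def leB (κ μ : YoungDiagram) : Prop :=
  ∀ i, 1 ≤ i → coord κ i ≤ coord μ i ∧ (Odd i → coord κ i = coord μ i) ∧
    Even (coord μ i - coord κ i)

-- construction lemma
lemma exists_diagram (c : ℕ → ℕ) (N : ℕ) (hc : ∀ i, N ≤ i → c i = 0) :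
    ∃ μ : YoungDiagram,
      (∀ j, μ.rowLen j = ∑ i ∈ Finset.Ioc j N, c i) ∧
      (∀ j, μ.rowLen j = c (j + 1) + μ.rowLen (j + 1)) ∧
      (∀ i, 1 ≤ i → coord μ i = c i) := by
  classical
  set f : ℕ → ℕ := fun r => ∑ i ∈ Finset.Ioc r N, c i with hfdef
  have hanti : ∀ r s : ℕ, r ≤ s → f s ≤ f r := by
    intro r s hrs
    exact Finset.sum_le_sum_of_subset (Finset.Ioc_subset_Ioc_left hrs)
  have hf0 : ∀ r, N ≤ r → f r = 0 := by
    intro r hr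
    simp [hfdef, Finset.Ioc_eq_empty (by omega : ¬ r < N)]
  have hrec : ∀ j, f j = c (j + 1) + f (j + 1) := by
    intro j
    by_cases hj : j + 1 ≤ N
    · have h1 : (∑ i ∈ Finset.Ioc j (j+1), c i) + ∑ i ∈ Finset.Ioc (j+1) N, c i
          = ∑ i ∈ Finset.Ioc j N, c i :=
        Finset.sum_Ioc_consecutive c (by omega) hj
      have h2 : Finset.Ioc j (j+1) = {j+1} := by
        ext x; simp only [Finset.mem_Ioc, Finset.mem_singleton]; omega
      rw [h2, Finset.sum_singleton] at h1
      simp only [hfdef]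
      omega
    · rw [hf0 j (by omega), hf0 (j+1) (by omega), hc (j+1) (by omega)]
  let cells : Finset (ℕ × ℕ) :=
    (Finset.range (N+1) ×ˢ Finset.range (f 0 + 1)).filter fun p => p.2 < f p.1
  have hmem : ∀ p : ℕ × ℕ, p ∈ cells ↔ p.2 < f p.1 := by
    intro p
    simp only [cells, Finset.mem_filter, Finset.mem_product, Finset.mem_range]
    constructor
    · rintro ⟨_, h⟩; exact h
    · intro h
      refine ⟨⟨?_, ?_⟩, h⟩
      · by_contra hcon
        have := hf0 p.1 (by omega)
        omega
      · have := hanti 0 p.1 (Nat.zero_le _); omega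
  have hlow : IsLowerSet (↑cells : Set (ℕ × ℕ)) := by
    intro a b hba ha
    rw [Finset.mem_coe, hmem] at ha ⊢
    have h1 : b.1 ≤ a.1 := hba.1
    have h2 : b.2 ≤ a.2 := hba.2
    exact lt_of_le_of_lt h2 (lt_of_lt_of_le ha (hanti _ _ h1))
  set μ : YoungDiagram := ⟨cells, hlow⟩ with hμ
  have hmem' : ∀ i j : ℕ, (i, j) ∈ μ ↔ j < f i := fun i j => hmem (i, j)
  have hrow : ∀ j, μ.rowLen j = f j := by
    intro j
    apply Nat.le_antisymm
    · by_contra hcon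
      push_neg at hcon
      have h1 : (j, f j) ∈ μ := YoungDiagram.mem_iff_lt_rowLen.mpr hcon
      rw [hmem'] at h1
      omega
    · rcases Nat.eq_zero_or_pos (f j) with h0 | hpos
      · omega
      · have h1 : (j, f j - 1) ∈ μ := (hmem' j (f j - 1)).mpr (by omega)
        have h2 := YoungDiagram.mem_iff_lt_rowLen.mp h1
        omega
  refine ⟨μ, hrow, ?_, ?_⟩
  · intro j; rw [hrow, hrow, hrec]
  · intro i hi
    obtain ⟨j, rfl⟩ : ∃ j, i = j + 1 := ⟨i - 1, by omega⟩
    have h1 : (j + 1) - 1 = j := by omega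
    rw [coord, h1, hrow, hrow]
    have := hrec j
    omega

lemma wordPhi_eq_zero {i : ℕ} {w : List ℕ} (h : w.count i = 0) : wordPhi i w = 0 := by
  refine Nat.le_zero.mp (Finset.sup_le fun k _ => ?_)
  have h1 : (w.drop k).count i ≤ w.count i := (List.drop_sublist k w).count_le i
  omega

lemma wordEps_eq_zero {i : ℕ} {w : List ℕ} (h : w.count (i+1) = 0) : wordEps i w = 0 := by
  refine Nat.le_zero.mp (Finset.sup_le fun k _ => ?_)
  have h1 : (w.take k).count (i+1) ≤ w.count (i+1) := (List.take_sublist k w).count_le (i+1)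
  omega

lemma count_jword_big {lam : YoungDiagram} (b : SemistandardYoungTableau lam)
    {i : ℕ} (h : (jword b).sum < i) : (jword b).count i = 0 := by
  refine List.count_eq_zero.mpr fun hmem => ?_
  have := List.single_le_sum (fun y (_ : y ∈ jword b) => Nat.zero_le y) i hmem
  omega

lemma phi_big {lam : YoungDiagram} (b : SemistandardYoungTableau lam)
    {i : ℕ} (h : (jword b).sum < i) : phi i b = 0 :=
  wordPhi_eq_zero (count_jword_big b h)

lemma eps_big {lam : YoungDiagram} (b : SemistandardYoungTableau lam)
    {i : ℕ} (h : (jword b).sum < i) : eps i b = 0 :=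
  wordEps_eq_zero (count_jword_big b (by omega))

lemma coord_even {ν : YoungDiagram} (h : EvenParts ν) {i : ℕ} (hi : 1 ≤ i) :
    Even (coord ν i) := by
  obtain ⟨j, rfl⟩ : ∃ j, i = j + 1 := ⟨i - 1, by omega⟩
  have h1 : (j + 1) - 1 = j := by omega
  rw [coord, h1]
  have hle : ν.rowLen (j+1) ≤ ν.rowLen j := ν.rowLen_anti j (j+1) (by omega)
  exact (Nat.even_sub hle).mpr (by simp [h j, h (j+1)])

lemma coord_odd_zero {δ : YoungDiagram} (h : EvenMult δ) {i : ℕ} (hi : Odd i) :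
    coord δ i = 0 := by
  obtain ⟨k, rfl⟩ := hi
  have h1 : (2 * k + 1) - 1 = 2 * k := by omega
  rw [coord, h1, h k, Nat.sub_self]

lemma muB_odd {lam : YoungDiagram} (b : SemistandardYoungTableau lam) {i : ℕ}
    (hi : Odd i) : muBcoord b i = 0 := by
  rw [muBcoord, if_neg]
  rintro ⟨he, -⟩
  exact (Nat.not_even_iff_odd.mpr hi) he


/-- `b` is `μ`-distinguished for some partition `μ` if and only if
`ε_i(b) = 0` for every odd `i` and `φ_i(b)` is even for every odd `i`; moreover, in that case
the minimal such `μ` is `μ_b = Σ_i (φ_{2i}(b) mod 2) ω_{2i}`. -/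
theorem distinguished_characterization (lam : YoungDiagram)
    (b : SemistandardYoungTableau lam) (hpos : PosEntries b) :
    ((∃ μ : YoungDiagram, Distinguished b μ) ↔
      ((∀ i, Odd i → eps i b = 0) ∧ (∀ i, Odd i → Even (phi i b)))) ∧
    ((∃ μ : YoungDiagram, Distinguished b μ) →
      ∀ μb : YoungDiagram, (∀ i, 1 ≤ i → coord μb i = muBcoord b i) →
        Distinguished b μb ∧ ∀ μ : YoungDiagram, Distinguished b μ → leB μb μ) := by
  classical
  set S := (jword b).sum with hS
  have key : (∀ i, Odd i → eps i b = 0) → (∀ i, Odd i → Even (phi i b)) →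
      ∀ μb : YoungDiagram, (∀ i, 1 ≤ i → coord μb i = muBcoord b i) → Distinguished b μb := by
    intro h1 h2 μb hμb
    obtain ⟨ν, hνrow, _, hνc⟩ := exists_diagram (fun i => phi i b + muBcoord b i) (S + 1)
      (fun i hi => by
        have hp := phi_big b (show S < i by omega)
        simp [muBcoord, hp])
    obtain ⟨δ, _, hδrec, hδc⟩ := exists_diagram (fun i => eps i b + muBcoord b i) (S + 1)
      (fun i hi => by
        have hp := phi_big b (show S < i by omega)
        have he := eps_big b (show S < i by omega)
        simp [muBcoord, hp, he])
    refine ⟨ν, δ, ?_, ?_, ?_, ?_⟩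
    · intro r
      rw [hνrow r]
      refine Finset.even_sum _ fun i hi => ?_
      have hi1 : 1 ≤ i := by have := (Finset.mem_Ioc.mp hi).1; omega
      show Even (phi i b + muBcoord b i)
      rcases Nat.even_or_odd i with he | ho
      · rw [muBcoord, if_pos ⟨he, hi1⟩, Nat.even_iff]; omega
      · rw [muB_odd b ho]
        simpa using h2 i ho
    · intro k
      have hrec := hδrec (2 * k)
      have ho : Odd (2 * k + 1) := ⟨k, rfl⟩
      simp only [h1 _ ho, muB_odd b ho] at hrec
      omega
    · intro i hi; rw [hνc i hi, hμb i hi]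
    · intro i hi; rw [hδc i hi, hμb i hi]
  have fwd : (∃ μ, Distinguished b μ) →
      (∀ i, Odd i → eps i b = 0) ∧ (∀ i, Odd i → Even (phi i b)) := by
    rintro ⟨μ, ν, δ, hν, hδ, hcν, hcδ⟩
    have hodd : ∀ i, Odd i → eps i b = 0 ∧ coord μ i = 0 := by
      intro i hi
      have hi1 : 1 ≤ i := by obtain ⟨k, hk⟩ := hi; omega
      have h0 := coord_odd_zero hδ hi
      have hd := hcδ i hi1
      omega
    refine ⟨fun i hi => (hodd i hi).1, fun i hi => ?_⟩
    have hi1 : 1 ≤ i := by obtain ⟨k, hk⟩ := hi; omega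
    have he := coord_even hν hi1
    rw [hcν i hi1, (hodd i hi).2] at he
    simpa using he
  have minim : ∀ μ : YoungDiagram, Distinguished b μ →
      ∀ μb : YoungDiagram, (∀ i, 1 ≤ i → coord μb i = muBcoord b i) → leB μb μ := by
    rintro μ ⟨ν, δ, hν, hδ, hcν, hcδ⟩ μb hμb i hi
    rw [hμb i hi]
    rcases Nat.even_or_odd i with he | ho
    · have hev := coord_even hν hi
      rw [hcν i hi] at hev
      rw [muBcoord, if_pos ⟨he, hi⟩]
      rw [Nat.even_iff] at hev
      refine ⟨by omega, ?_, by rw [Nat.even_iff]; omega⟩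
      intro hoi
      exact absurd he (Nat.not_even_iff_odd.mpr hoi)
    · have h0 := coord_odd_zero hδ ho
      have hd := hcδ i hi
      rw [muB_odd b ho]
      have hz : coord μ i = 0 := by omega
      exact ⟨by omega, fun _ => by omega, by simp [hz]⟩
  refine ⟨⟨fwd, ?_⟩, ?_⟩
  · rintro ⟨h1, h2⟩
    obtain ⟨μb, _, _, hμbc⟩ := exists_diagram (muBcoord b) (S + 1) (fun i hi => by
      have hp := phi_big b (show S < i by omega)
      simp [muBcoord, hp])
    exact ⟨μb, key h1 h2 μb hμbc⟩
  · intro hex μb hμbc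
    obtain ⟨h1, h2⟩ := fwd hex
    exact ⟨key h1 h2 μb hμbc, fun μ hμ => minim μ hμ μb hμbc⟩

end GE
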